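/- For 0 ≤ β/α < 1, the function σ(n) = ∑_{i=1}^{M} (β/α)^{n_i} on vectors n = (n_1,...,n_M) of natural numbers with ∑ n_i = D attains its minimum at any vector that is almost constant, i.e. satisfies n_i − n_j ≤ 1 for all i, j. -/

import Mathlib

open Finset

lemma sum_split {β : Type*} [AddCommMonoid β] {M : ℕ} (i j : Fin M) (hij : i ≠ j)
    (g : Fin M → β) :
    ∑ x, g x = g i + (g j + ∑ x ∈ (univ.erase i).erase j, g x) := by
  rw [Finset.add_sum_erase _ g (Finset.mem_erase.mpr ⟨hij.symm, mem_univ j⟩),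
    Finset.add_sum_erase _ g (mem_univ i)]

lemma sum_split2 {β : Type*} [AddCommMonoid β] {M : ℕ} (i j : Fin M) (hij : i ≠ j)
    (f g : Fin M → β) (h : ∀ x, x ≠ i → x ≠ j → f x = g x) :
    (∑ x, f x) + (g i + g j) = (∑ x, g x) + (f i + f j) := by
  rw [sum_split i j hij f, sum_split i j hij g,
    Finset.sum_congr rfl (fun x hx => ?_)]
  · abel
  · exact h x (Finset.mem_erase.mp (Finset.mem_erase.mp hx).2).1 (Finset.mem_erase.mp hx).1

lemma key_ineq (r : ℝ) (hr0 : 0 ≤ r) (hr1 : r < 1) (a b : ℕ) (h : b + 2 ≤ a) :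
    r ^ (a - 1) + r ^ (b + 1) ≤ r ^ a + r ^ b := by
  obtain ⟨c, rfl⟩ : ∃ c, a = c + 1 := ⟨a - 1, by omega⟩
  simp only [Nat.add_sub_cancel]
  have hle : r ^ c ≤ r ^ b := pow_le_pow_of_le_one hr0 hr1.le (by omega)
  rw [pow_succ, pow_succ]
  nlinarith [mul_le_mul_of_nonneg_right hle (by linarith : (0:ℝ) ≤ 1 - r)]

lemma ac_val (M : ℕ) (hM : 1 ≤ M) (r : ℝ) (n : Fin M → ℕ) (hac : ∀ i j, n i ≤ n j + 1) :
    ∑ i, r ^ n i =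
      ((M - (∑ i, n i) % M : ℕ) : ℝ) * r ^ ((∑ i, n i) / M) +
      (((∑ i, n i) % M : ℕ) : ℝ) * r ^ ((∑ i, n i) / M + 1) := by
  obtain ⟨i₀, -, hmin⟩ := Finset.exists_min_image univ n ⟨⟨0, hM⟩, mem_univ _⟩
  set k := n i₀ with hk
  have hval : ∀ i, n i = k ∨ n i = k + 1 := fun i => by
    have h1 := hmin i (mem_univ i)
    have h2 := hac i i₀
    omega
  set S := univ.filter (fun i => n i = k + 1) with hS
  have hi0 : i₀ ∉ S := by simp [hS]; omega
  have hcard : S.card < M := by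
    have hss : S ⊂ univ := Finset.ssubset_univ_iff.mpr (fun h => hi0 (h ▸ mem_univ i₀))
    simpa using Finset.card_lt_card hss
  have hcards : S.card + (univ.filter (fun i => ¬ n i = k + 1)).card = M := by
    rw [Finset.card_filter_add_card_filter_not]
    simp
  have hsum' : ∑ i, n i = M * k + S.card := by
    rw [← Finset.sum_filter_add_sum_filter_not univ (fun i => n i = k + 1)]
    have e1 : ∑ i ∈ S, n i = S.card * (k + 1) := by
      rw [Finset.sum_congr rfl (fun x hx => (Finset.mem_filter.mp hx).2)]
      simp [mul_comm, hS]
    have e2 : ∑ i ∈ univ.filter (fun i => ¬ n i = k + 1), n i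
        = (univ.filter (fun i => ¬ n i = k + 1)).card * k := by
      have hk' : ∀ x ∈ univ.filter (fun i => ¬ n i = k + 1), n x = k := by
        intro x hx
        have := hval x
        have := (Finset.mem_filter.mp hx).2
        omega
      rw [Finset.sum_congr rfl hk', Finset.sum_const, smul_eq_mul]
    rw [e1, e2]
    obtain ⟨t, ht⟩ : ∃ t, (univ.filter (fun i => ¬ n i = k + 1)).card = t := ⟨_, rfl⟩
    rw [ht] at hcards ⊢
    have h4 : (S.card + t) * k = M * k := by rw [hcards]
    have h5 : (S.card + t) * k = S.card * k + t * k := Nat.add_mul _ _ _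
    have h6 : S.card * (k + 1) = S.card * k + S.card := Nat.mul_succ _ _
    linarith
  have hdiv : (∑ i, n i) / M = k := by
    rw [hsum', Nat.mul_add_div (by omega), Nat.div_eq_of_lt hcard]
    omega
  have hmod : (∑ i, n i) % M = S.card := by
    rw [hsum', Nat.mul_add_mod, Nat.mod_eq_of_lt hcard]
  rw [hdiv, hmod]
  rw [← Finset.sum_filter_add_sum_filter_not univ (fun i => n i = k + 1) (fun i => r ^ n i)]
  have e1 : ∑ i ∈ S, r ^ n i = (S.card : ℝ) * r ^ (k + 1) := by
    rw [Finset.sum_congr rfl (fun x hx => by rw [(Finset.mem_filter.mp hx).2])]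
    simp
  have e2 : ∑ i ∈ univ.filter (fun i => ¬ n i = k + 1), r ^ n i
      = ((M - S.card : ℕ) : ℝ) * r ^ k := by
    have hk' : ∀ x ∈ univ.filter (fun i => ¬ n i = k + 1), r ^ n x = r ^ k := by
      intro x hx
      have h1 := hval x
      have h2 := (Finset.mem_filter.mp hx).2
      rw [show n x = k by omega]
    rw [Finset.sum_congr rfl hk', Finset.sum_const, nsmul_eq_mul]
    congr 2
    omega
  rw [e1, e2]
  ring

theorem almost_constant_minimizes (M D : ℕ) (hM : 1 ≤ M) (r : ℝ) (hr0 : 0 ≤ r) (hr1 : r < 1)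
    (n : Fin M → ℕ) (hsum : ∑ i, n i = D)
    (hac : ∀ i j, n i ≤ n j + 1) :
    ∀ m : Fin M → ℕ, (∑ i, m i = D) →
      ∑ i, r ^ n i ≤ ∑ i, r ^ m i := by
  intro m hm
  rw [ac_val M hM r n hac, hsum]
  suffices H : ∀ W (m : Fin M → ℕ), ∑ i, (m i)^2 ≤ W → ∑ i, m i = D →
      ((M - D % M : ℕ) : ℝ) * r ^ (D / M) + ((D % M : ℕ) : ℝ) * r ^ (D / M + 1)
        ≤ ∑ i, r ^ m i from H _ m le_rfl hm
  intro W
  induction W with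
  | zero =>
    intro m h2 h1
    have hmc : ∀ i j, m i ≤ m j + 1 := by
      intro i j
      have hi : (m i)^2 ≤ 0 :=
        le_trans (Finset.single_le_sum (f := fun i => (m i)^2)
          (fun x _ => Nat.zero_le _) (mem_univ i)) h2
      have : m i = 0 := by nlinarith
      omega
    rw [ac_val M hM r m hmc, h1]
  | succ W ih =>
    intro m h2 h1
    by_cases hmc : ∀ i j, m i ≤ m j + 1
    · rw [ac_val M hM r m hmc, h1]
    · push_neg at hmc
      obtain ⟨i, j, hij2⟩ := hmc
      have hij : i ≠ j := by intro h; subst h; omega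
      set m' : Fin M → ℕ := fun x => if x = i then m i - 1 else if x = j then m j + 1 else m x
        with hm'
      have hmi : m' i = m i - 1 := by simp [hm']
      have hmj : m' j = m j + 1 := by simp [hm', hij.symm]
      have hoff : ∀ x, x ≠ i → x ≠ j → m' x = m x := by
        intro x hxi hxj; simp [hm', hxi, hxj]
      have hsm : ∑ x, m' x = D := by
        have := sum_split2 i j hij m' m hoff
        rw [hmi, hmj] at this
        omega
      have hsq : ∑ x, (m' x)^2 ≤ W := by
        have := sum_split2 i j hij (fun x => (m' x)^2) (fun x => (m x)^2)
          (fun x hxi hxj => by simp only [hoff x hxi hxj])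
        simp only [hmi, hmj] at this
        obtain ⟨c, hc⟩ : ∃ c, m i = c + 1 := ⟨m i - 1, by omega⟩
        rw [hc] at this
        simp only [Nat.add_sub_cancel] at this
        have hlt : (c : ℕ)^2 + (m j + 1)^2 + 1 ≤ (c+1)^2 + (m j)^2 := by nlinarith
        nlinarith [h2, this]
      have hσ : ∑ x, r ^ m' x ≤ ∑ x, r ^ m x := by
        have hs := sum_split2 i j hij (fun x => r ^ m' x) (fun x => r ^ m x)
          (fun x hxi hxj => by simp only [hoff x hxi hxj])
        simp only [hmi, hmj] at hs
        have hkey := key_ineq r hr0 hr1 (m i) (m j) (by omega)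
        linarith
      exact le_trans (ih m' hsq hsm) hσ
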